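/- For each N ≥ 2 let F_N be an isotropic random continuous field on S^N. Assume there exists α > 0 such that: (1) for every c, δ > 0 there exist c₁ > 0 and C₁ > 0 with P( |F_N(𝐧) − E[F_N(𝐧)]| ≥ c·N^{1/2+δ} ) ≤ C₁·exp(−c₁·N^{1+2δ}) for all N; and (2) for every c, δ > 0 there exist c₂ > 0 and C₂ > 0 with P( sup{ |F_N(x) − F_N(y)| : x, y ∈ S^N, R(x,y) ≥ 1 − N^{−α} } ≥ c·N^{1/2+δ} ) ≤ C₂·exp(−c₂·N^{1+2δ}) for all N. Then for every c, δ > 0 there exist f > 0 and C > 0 such that for all N, P( sup_{x ∈ S^N} |F_N(x) − E[F_N(𝐧)]| ≥ c·N^{1/2+δ} ) ≤ C·exp(−f·N^{1+2δ}). -/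

import Mathlib

open MeasureTheory

/-- The sphere `S^N` of radius `√N` in `ℝ^N`. -/
noncomputable def sphereN (N : ℕ) : Set (EuclideanSpace ℝ (Fin N)) :=
  Metric.sphere (0 : EuclideanSpace ℝ (Fin N)) (Real.sqrt N)

/-- The north pole `𝐧 = (√N, 0, …, 0) ∈ S^N`. -/
noncomputable def nPole (N : ℕ) (hN : 0 < N) : sphereN N :=
  ⟨EuclideanSpace.single (⟨0, hN⟩ : Fin N) (Real.sqrt N), by
    simp [sphereN, mem_sphere_iff_norm, EuclideanSpace.norm_single,
      abs_of_nonneg (Real.sqrt_nonneg (N : ℝ))]⟩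

/-- A linear isometry (in particular, an orthogonal map) of `ℝ^N` restricted to the
sphere `S^N`. -/
noncomputable def sphereMap {N : ℕ}
    (O : EuclideanSpace ℝ (Fin N) ≃ₗᵢ[ℝ] EuclideanSpace ℝ (Fin N)) (x : sphereN N) :
    sphereN N :=
  ⟨O x, by
    have hx : ‖(x : EuclideanSpace ℝ (Fin N))‖ = Real.sqrt N := by
      simpa [sphereN, mem_sphere_iff_norm] using x.2
    simp [sphereN, mem_sphere_iff_norm, O.norm_map, hx]⟩

/-- The overlap `R(x,y) = (1/N) Σᵢ xᵢ yᵢ` of two points of `S^N`. -/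
noncomputable def overlap {N : ℕ} (x y : sphereN N) : ℝ :=
  (inner ℝ (x : EuclideanSpace ℝ (Fin N)) (y : EuclideanSpace ℝ (Fin N)) : ℝ) / N

open Metric Filter
open scoped ENNReal NNReal

namespace IsoFieldAux

lemma sphereN_mem_norm {N : ℕ} {x : EuclideanSpace ℝ (Fin N)} (hx : x ∈ sphereN N) :
    ‖x‖ = Real.sqrt N := by
  simpa [sphereN, mem_sphere_iff_norm] using hx

lemma sphereN_norm' {N : ℕ} (x : sphereN N) :
    ‖(x : EuclideanSpace ℝ (Fin N))‖ = Real.sqrt N :=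
  sphereN_mem_norm x.2

lemma card_le_of_sep {N : ℕ} (r : ℝ) (hr : 0 < r) (S : Finset (EuclideanSpace ℝ (Fin N)))
    (hS : ∀ s ∈ S, s ∈ sphereN N)
    (h : ∀ s ∈ S, ∀ t ∈ S, s ≠ t → r < dist s t) :
    (S.card : ℝ) ≤ ((Real.sqrt N + r / 2) / (r / 2)) ^ N := by
  classical
  let μ : Measure (EuclideanSpace ℝ (Fin N)) := Measure.addHaar
  have δpos : (0:ℝ) < r / 2 := half_pos hr
  set ρ : ℝ := Real.sqrt N + r / 2 with hρ
  have ρpos : 0 < ρ := by positivity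
  set A := ⋃ c ∈ S, ball c (r / 2) with hA
  have D : Set.Pairwise (S : Set (EuclideanSpace ℝ (Fin N)))
      (Function.onFun Disjoint fun c => ball c (r / 2)) := by
    rintro c hc d hd hcd
    apply ball_disjoint_ball
    calc r / 2 + r / 2 = r := add_halves r
      _ ≤ dist c d := (h c hc d hd hcd).le
  have A_subset : A ⊆ ball (0 : EuclideanSpace ℝ (Fin N)) ρ := by
    refine Set.iUnion₂_subset fun x hx => ball_subset_ball' ?_
    have := sphereN_mem_norm (hS x hx)
    rw [dist_zero_right, this, hρ]
    linarith
  have hdim : Module.finrank ℝ (EuclideanSpace ℝ (Fin N)) = N := finrank_euclideanSpace_fin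
  have I :
      (S.card : ℝ≥0∞) * ENNReal.ofReal ((r / 2) ^ N) * μ (ball 0 1) ≤
        ENNReal.ofReal (ρ ^ N) * μ (ball 0 1) :=
    calc
      (S.card : ℝ≥0∞) * ENNReal.ofReal ((r / 2) ^ N) * μ (ball 0 1) = μ A := by
        rw [hA, measure_biUnion_finset D fun c _ => measurableSet_ball]
        simp only [μ.addHaar_ball_of_pos _ δpos, hdim, Finset.sum_const, nsmul_eq_mul, mul_assoc]
      _ ≤ μ (ball (0 : EuclideanSpace ℝ (Fin N)) ρ) := measure_mono A_subset
      _ = ENNReal.ofReal (ρ ^ N) * μ (ball 0 1) := by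
        rw [μ.addHaar_ball_of_pos _ ρpos, hdim]
  have J : (S.card : ℝ≥0∞) * ENNReal.ofReal ((r / 2) ^ N) ≤ ENNReal.ofReal (ρ ^ N) :=
    (ENNReal.mul_le_mul_iff_left (measure_ball_pos _ _ zero_lt_one).ne' measure_ball_lt_top.ne).1 I
  have K := ENNReal.toReal_le_of_le_ofReal (pow_nonneg ρpos.le _) J
  rw [ENNReal.toReal_mul, ENNReal.toReal_ofReal (pow_nonneg δpos.le _)] at K
  simp only [ENNReal.toReal_natCast] at K
  rw [div_pow, le_div_iff₀ (pow_pos δpos _)]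
  exact K

lemma exists_net (N : ℕ) (r : ℝ) (hr : 0 < r) :
    ∃ T : Finset (EuclideanSpace ℝ (Fin N)), (∀ t ∈ T, t ∈ sphereN N) ∧
      (T.card : ℝ) ≤ ((Real.sqrt N + r / 2) / (r / 2)) ^ N ∧
      ∀ x ∈ sphereN N, ∃ t ∈ T, dist x t ≤ r := by
  classical
  set P : Finset (EuclideanSpace ℝ (Fin N)) → Prop := fun S =>
    (∀ s ∈ S, s ∈ sphereN N) ∧ ∀ s ∈ S, ∀ t ∈ S, s ≠ t → r < dist s t with hP
  set 𝒞 : Set ℕ := {n | ∃ S, P S ∧ S.card = n} with h𝒞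
  have h0 : 0 ∈ 𝒞 := ⟨∅, ⟨by simp, by simp⟩, by simp⟩
  have hbdd : BddAbove 𝒞 := by
    refine ⟨⌊((Real.sqrt N + r / 2) / (r / 2)) ^ N⌋₊, ?_⟩
    rintro n ⟨S, hPS, rfl⟩
    exact Nat.le_floor (card_le_of_sep r hr S hPS.1 hPS.2)
  obtain ⟨S, hPS, hcard⟩ : ∃ S, P S ∧ S.card = sSup 𝒞 := Nat.sSup_mem ⟨0, h0⟩ hbdd
  refine ⟨S, hPS.1, card_le_of_sep r hr S hPS.1 hPS.2, ?_⟩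
  intro x hx
  by_contra hcon
  push_neg at hcon
  have hxS : x ∉ S := fun hxS => by
    have := hcon x hxS
    simp at this
    linarith
  have hP' : P (insert x S) := by
    constructor
    · intro s hs
      rcases Finset.mem_insert.1 hs with hs' | hs'
      · rw [hs']; exact hx
      · exact hPS.1 s hs'
    · intro s hs t ht hst
      rcases Finset.mem_insert.1 hs with hs' | hs' <;> rcases Finset.mem_insert.1 ht with ht' | ht'
      · exact absurd (hs'.trans ht'.symm) hst
      · rw [hs']; exact hcon t ht'
      · rw [ht', dist_comm]; exact hcon s hs'
      · exact hPS.2 s hs' t ht' hst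
  have hmem : (insert x S).card ∈ 𝒞 := ⟨_, hP', rfl⟩
  have := le_csSup hbdd hmem
  rw [Finset.card_insert_of_notMem hxS, hcard] at this
  omega

lemma overlap_of_dist_le {N : ℕ} (hN : 0 < N) {α : ℝ} (x y : sphereN N)
    (h : dist (x : EuclideanSpace ℝ (Fin N)) (y : EuclideanSpace ℝ (Fin N))
      ≤ Real.sqrt (2 * (N : ℝ) ^ ((1 : ℝ) - α))) :
    1 - (N : ℝ) ^ (-α) ≤ overlap x y := by
  have hN' : (0:ℝ) < N := by exact_mod_cast hN
  have hx2 : ‖(x : EuclideanSpace ℝ (Fin N))‖ ^ 2 = (N : ℝ) := by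
    rw [sphereN_norm', Real.sq_sqrt hN'.le]
  have hy2 : ‖(y : EuclideanSpace ℝ (Fin N))‖ ^ 2 = (N : ℝ) := by
    rw [sphereN_norm', Real.sq_sqrt hN'.le]
  have hd2 : ‖(x : EuclideanSpace ℝ (Fin N)) - (y : EuclideanSpace ℝ (Fin N))‖ ^ 2
      ≤ 2 * (N : ℝ) ^ ((1 : ℝ) - α) := by
    have h0 : (0:ℝ) ≤ 2 * (N : ℝ) ^ ((1 : ℝ) - α) := by positivity
    have hdn : ‖(x : EuclideanSpace ℝ (Fin N)) - (y : EuclideanSpace ℝ (Fin N))‖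
        ≤ Real.sqrt (2 * (N : ℝ) ^ ((1 : ℝ) - α)) := by
      rw [← dist_eq_norm]; exact h
    have := pow_le_pow_left₀ (norm_nonneg _) hdn 2
    rwa [Real.sq_sqrt h0] at this
  have hinner : (N : ℝ) - (N : ℝ) ^ ((1 : ℝ) - α)
      ≤ (inner ℝ (x : EuclideanSpace ℝ (Fin N)) (y : EuclideanSpace ℝ (Fin N)) : ℝ) := by
    have hns := norm_sub_sq_real (x : EuclideanSpace ℝ (Fin N)) (y : EuclideanSpace ℝ (Fin N))
    nlinarith [hns]
  have hsplit : (N : ℝ) ^ ((1 : ℝ) - α) = (N : ℝ) * (N : ℝ) ^ (-α) := by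
    rw [show (1 : ℝ) - α = 1 + (-α) by ring, Real.rpow_add hN', Real.rpow_one]
  rw [overlap, le_div_iff₀ hN']
  nlinarith [hinner, hsplit]

lemma transfer {N : ℕ} (hN : 0 < N) {Ωt : Type} [MeasurableSpace Ωt] (μ : Measure Ωt)
    (F : Ωt → sphereN N → ℝ) (hFm : Measurable F)
    (hiso : ∀ O : EuclideanSpace ℝ (Fin N) ≃ₗᵢ[ℝ] EuclideanSpace ℝ (Fin N),
      Measure.map (fun ω x => F ω (sphereMap O x)) μ = Measure.map F μ)
    (t : sphereN N) (a E : ℝ) :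
    μ {ω | a ≤ |F ω t - E|} = μ {ω | a ≤ |F ω (nPole N hN) - E|} := by
  have hnorm : ‖((nPole N hN : sphereN N) : EuclideanSpace ℝ (Fin N))‖
      = ‖(t : EuclideanSpace ℝ (Fin N))‖ := by
    rw [sphereN_norm', sphereN_norm']
  set O : EuclideanSpace ℝ (Fin N) ≃ₗᵢ[ℝ] EuclideanSpace ℝ (Fin N) :=
    Submodule.reflection (ℝ ∙ (((nPole N hN : sphereN N) : EuclideanSpace ℝ (Fin N))
      - (t : EuclideanSpace ℝ (Fin N))))ᗮ with hO
  have hOn : sphereMap O (nPole N hN) = t := Subtype.ext (Submodule.reflection_sub hnorm)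
  set A : Set (sphereN N → ℝ) := (fun g => |g (nPole N hN) - E|) ⁻¹' Set.Ici a with hAdef
  have hAm : MeasurableSet A :=
    (((measurable_pi_apply (nPole N hN)).sub measurable_const).abs) measurableSet_Ici
  have hG : Measurable (fun ω x => F ω (sphereMap O x)) :=
    measurable_pi_iff.mpr fun x => (measurable_pi_apply (sphereMap O x)).comp hFm
  calc μ {ω | a ≤ |F ω t - E|}
      = μ ((fun ω x => F ω (sphereMap O x)) ⁻¹' A) := by
        congr 1
        ext ω
        simp [hAdef, hOn]
    _ = Measure.map (fun ω x => F ω (sphereMap O x)) μ A := (Measure.map_apply hG hAm).symm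
    _ = Measure.map F μ A := by rw [hiso O]
    _ = μ (F ⁻¹' A) := Measure.map_apply hFm hAm
    _ = μ {ω | a ≤ |F ω (nPole N hN) - E|} := by
        congr 1

lemma exists_N0 (α c₁ δ : ℝ) (hα : 0 < α) (hc₁ : 0 < c₁) (hδ : 0 < δ) :
    ∃ N₀ : ℕ, ∀ N : ℕ, N₀ ≤ N →
      Real.log 3 + α / 2 * Real.log N ≤ c₁ / 2 * (N : ℝ) ^ (2 * δ) := by
  have h2δ : (0:ℝ) < 2 * δ := by positivity
  have t1 : Tendsto (fun x : ℝ => x ^ (2 * δ)) atTop atTop := tendsto_rpow_atTop h2δ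
  have e1 : ∀ᶠ x : ℝ in atTop, Real.log 3 ≤ c₁ / 4 * x ^ (2 * δ) := by
    filter_upwards [t1.eventually_ge_atTop (4 / c₁ * Real.log 3)] with x hx
    have h4 : (0:ℝ) < c₁ / 4 := by positivity
    calc Real.log 3 = c₁ / 4 * (4 / c₁ * Real.log 3) := by field_simp
      _ ≤ c₁ / 4 * x ^ (2 * δ) := mul_le_mul_of_nonneg_left hx h4.le
  have e2 : ∀ᶠ x : ℝ in atTop, α / 2 * Real.log x ≤ c₁ / 4 * x ^ (2 * δ) := by
    have hlo := (isLittleO_log_rpow_atTop h2δ).def (show (0:ℝ) < c₁ / (2 * α) by positivity)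
    filter_upwards [hlo, eventually_ge_atTop (1 : ℝ)] with x hx hx1
    rw [Real.norm_eq_abs, Real.norm_eq_abs, abs_of_nonneg (Real.log_nonneg hx1),
      abs_of_nonneg (Real.rpow_nonneg (by linarith) _)] at hx
    have h := mul_le_mul_of_nonneg_left hx (show (0:ℝ) ≤ α / 2 by positivity)
    calc α / 2 * Real.log x ≤ α / 2 * (c₁ / (2 * α) * x ^ (2 * δ)) := h
      _ = c₁ / 4 * x ^ (2 * δ) := by field_simp; ring
  obtain ⟨x₀, hx₀⟩ := eventually_atTop.mp (e1.and e2)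
  refine ⟨⌈x₀⌉₊, fun N hN => ?_⟩
  have hxN : x₀ ≤ (N : ℝ) := le_trans (Nat.le_ceil x₀) (by exact_mod_cast hN)
  obtain ⟨h1, h2⟩ := hx₀ N hxN
  linarith

lemma base_bound {N : ℕ} (hN : 1 ≤ N) {α : ℝ} (hα : 0 < α) :
    (Real.sqrt N + Real.sqrt (2 * (N : ℝ) ^ ((1 : ℝ) - α)) / 2) /
      (Real.sqrt (2 * (N : ℝ) ^ ((1 : ℝ) - α)) / 2) ≤ 3 * (N : ℝ) ^ (α / 2) := by
  have hN' : (0:ℝ) < N := by exact_mod_cast hN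
  have hN1 : (1:ℝ) ≤ N := by exact_mod_cast hN
  set A : ℝ := (N : ℝ) ^ (α / 2) with hA
  set B : ℝ := (N : ℝ) ^ (((1 : ℝ) - α) / 2) with hB
  have hApos : 0 < A := Real.rpow_pos_of_pos hN' _
  have hBpos : 0 < B := Real.rpow_pos_of_pos hN' _
  have hA1 : 1 ≤ A := Real.one_le_rpow hN1 (by positivity)
  have hs2 : (1:ℝ) ≤ Real.sqrt 2 := by
    rw [show (1:ℝ) = Real.sqrt 1 by simp]
    exact Real.sqrt_le_sqrt (by norm_num)
  have hB2 : B ^ 2 = (N : ℝ) ^ ((1 : ℝ) - α) := by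
    rw [hB, ← Real.rpow_natCast ((N : ℝ) ^ (((1 : ℝ) - α) / 2)) 2, ← Real.rpow_mul hN'.le]
    norm_num
  have hr1 : Real.sqrt (2 * (N : ℝ) ^ ((1 : ℝ) - α)) = Real.sqrt 2 * B := by
    rw [Real.sqrt_mul (by norm_num : (0:ℝ) ≤ 2), ← hB2, Real.sqrt_sq hBpos.le]
  have hsN : Real.sqrt N = A * B := by
    rw [Real.sqrt_eq_rpow, hA, hB, ← Real.rpow_add hN']
    congr 1
    ring
  rw [hr1, hsN, div_le_iff₀ (by positivity)]
  nlinarith [mul_nonneg hBpos.le (mul_nonneg hApos.le (sub_nonneg.mpr hs2)),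
    mul_nonneg hBpos.le (mul_nonneg (le_trans zero_le_one hs2) (sub_nonneg.mpr hA1))]

lemma pow_bound {N : ℕ} (hN : 1 ≤ N) {α c₁ δ : ℝ} (hα : 0 < α)
    (hlog : Real.log 3 + α / 2 * Real.log N ≤ c₁ / 2 * (N : ℝ) ^ (2 * δ)) :
    (3 * (N : ℝ) ^ (α / 2)) ^ N ≤ Real.exp (c₁ / 2 * (N : ℝ) ^ ((1 : ℝ) + 2 * δ)) := by
  have hN' : (0:ℝ) < N := by exact_mod_cast hN
  have hb : (0:ℝ) < 3 * (N : ℝ) ^ (α / 2) := by positivity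
  rw [← Real.exp_log hb, ← Real.exp_nat_mul, Real.exp_le_exp]
  have hlog3 : Real.log (3 * (N : ℝ) ^ (α / 2)) = Real.log 3 + α / 2 * Real.log N := by
    rw [Real.log_mul (by norm_num) (by positivity), Real.log_rpow hN']
  rw [hlog3]
  calc (N : ℝ) * (Real.log 3 + α / 2 * Real.log N)
      ≤ (N : ℝ) * (c₁ / 2 * (N : ℝ) ^ (2 * δ)) := mul_le_mul_of_nonneg_left hlog hN'.le
    _ = c₁ / 2 * (N : ℝ) ^ ((1 : ℝ) + 2 * δ) := by
        rw [Real.rpow_add hN', Real.rpow_one]; ring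

end IsoFieldAux

set_option maxHeartbeats 1000000 in
open IsoFieldAux in
/-- **From pointwise concentration and continuity to a uniform bound (centered case).**
If `F_N` is an isotropic random continuous field on `S^N` that (1) concentrates at
scale `N^{1/2+δ}` at the north pole and (2) has a modulus-of-continuity bound on pairs
of points with overlap at least `1 − N^{−α}`, then `sup_{S^N} |F_N − E[F_N(𝐧)]|`
satisfies the same concentration bound uniformly over the sphere. -/
theorem isotropic_field_uniform_concentration
    (Ω : ℕ → Type) (m : ∀ N, MeasurableSpace (Ω N)) (μ : ∀ N, Measure (Ω N))
    (hprob : ∀ N, IsProbabilityMeasure (μ N))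
    (F : ∀ N, Ω N → sphereN N → ℝ)
    (hcont : ∀ N ω, Continuous (F N ω))
    (hmeas : ∀ N, Measurable (F N))
    (hiso : ∀ N (O : EuclideanSpace ℝ (Fin N) ≃ₗᵢ[ℝ] EuclideanSpace ℝ (Fin N)),
      Measure.map (fun ω x => F N ω (sphereMap O x)) (μ N) = Measure.map (F N) (μ N))
    (α : ℝ) (hα : 0 < α)
    (hpoint : ∀ c > (0 : ℝ), ∀ δ > (0 : ℝ), ∃ c₁ > (0 : ℝ), ∃ C₁ > (0 : ℝ),
      ∀ N, ∀ hN : 2 ≤ N,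
        μ N {ω | c * (N : ℝ) ^ ((1 : ℝ) / 2 + δ) ≤
            |F N ω (nPole N (by omega)) - ∫ ω', F N ω' (nPole N (by omega)) ∂μ N|}
          ≤ ENNReal.ofReal (C₁ * Real.exp (-c₁ * (N : ℝ) ^ ((1 : ℝ) + 2 * δ))))
    (hmod : ∀ c > (0 : ℝ), ∀ δ > (0 : ℝ), ∃ c₂ > (0 : ℝ), ∃ C₂ > (0 : ℝ),
      ∀ N, 2 ≤ N →
        μ N {ω | c * (N : ℝ) ^ ((1 : ℝ) / 2 + δ) ≤
            sSup {r : ℝ | ∃ x y : sphereN N,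
              1 - (N : ℝ) ^ (-α) ≤ overlap x y ∧ r = |F N ω x - F N ω y|}}
          ≤ ENNReal.ofReal (C₂ * Real.exp (-c₂ * (N : ℝ) ^ ((1 : ℝ) + 2 * δ)))) :
    ∀ c > (0 : ℝ), ∀ δ > (0 : ℝ), ∃ f > (0 : ℝ), ∃ C > (0 : ℝ),
      ∀ N, ∀ hN : 2 ≤ N,
        μ N {ω | c * (N : ℝ) ^ ((1 : ℝ) / 2 + δ) ≤
            ⨆ x : sphereN N, |F N ω x - ∫ ω', F N ω' (nPole N (by omega)) ∂μ N|}
          ≤ ENNReal.ofReal (C * Real.exp (-f * (N : ℝ) ^ ((1 : ℝ) + 2 * δ))) := by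
  intro c hc δ hδ
  obtain ⟨c₁, hc₁, C₁, hC₁, Hpt⟩ := hpoint (c / 2) (by positivity) δ hδ
  obtain ⟨c₂, hc₂, C₂, hC₂, Hmod⟩ := hmod (c / 2) (by positivity) δ hδ
  obtain ⟨N₀, hN₀⟩ := exists_N0 α c₁ δ hα hc₁ hδ
  set f : ℝ := min (c₁ / 2) c₂ with hf
  have hfpos : 0 < f := lt_min (by positivity) hc₂
  set Cfin : ℝ := (C₁ + C₂) + Real.exp (f * ((N₀ : ℝ) + 1) ^ ((1 : ℝ) + 2 * δ)) with hCfin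
  have hCfinpos : 0 < Cfin := by positivity
  refine ⟨f, hfpos, Cfin, hCfinpos, ?_⟩
  intro N hN2
  have hNpos : 0 < N := by omega
  have hN' : (0:ℝ) < N := by exact_mod_cast hNpos
  haveI := hprob N
  set Eav : ℝ := ∫ ω', F N ω' (nPole N hNpos) ∂ μ N with hEav
  set e : ℝ := (1 : ℝ) + 2 * δ with he
  have hepos : 0 < e := by rw [he]; positivity
  by_cases hcase : N₀ ≤ N
  · -- main case
    set r : ℝ := Real.sqrt (2 * (N : ℝ) ^ ((1 : ℝ) - α)) with hrdef
    have hrpos : 0 < r := Real.sqrt_pos.mpr (by positivity)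
    obtain ⟨T, hT1, hT2, hT3⟩ := exists_net N r hrpos
    set Bset : Set (Ω N) := {ω | c / 2 * (N : ℝ) ^ ((1 : ℝ) / 2 + δ) ≤
      sSup {rr : ℝ | ∃ x y : sphereN N,
        1 - (N : ℝ) ^ (-α) ≤ overlap x y ∧ rr = |F N ω x - F N ω y|}} with hBset
    set Aset : EuclideanSpace ℝ (Fin N) → Set (Ω N) := fun t =>
      {ω | ∃ h : t ∈ sphereN N,
        c / 2 * (N : ℝ) ^ ((1 : ℝ) / 2 + δ) ≤ |F N ω ⟨t, h⟩ - Eav|} with hAset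
    have hincl : {ω | c * (N : ℝ) ^ ((1 : ℝ) / 2 + δ) ≤ ⨆ x : sphereN N, |F N ω x - Eav|}
        ⊆ (⋃ t ∈ T, Aset t) ∪ Bset := by
      intro ω hω
      haveI hcs : CompactSpace (sphereN N) :=
        isCompact_iff_compactSpace.mp
          (isCompact_sphere (0 : EuclideanSpace ℝ (Fin N)) (Real.sqrt N))
      haveI hne : Nonempty (sphereN N) := ⟨nPole N hNpos⟩
      obtain ⟨x₀, -, hx₀⟩ := isCompact_univ.exists_isMaxOn Set.univ_nonempty
        (((hcont N ω).sub continuous_const).abs.continuousOn)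
      have hsup : c * (N : ℝ) ^ ((1 : ℝ) / 2 + δ) ≤ |F N ω x₀ - Eav| :=
        le_trans hω (ciSup_le fun x => hx₀ (Set.mem_univ x))
      obtain ⟨t, htT, htd⟩ := hT3 (x₀ : EuclideanSpace ℝ (Fin N)) x₀.2
      have htS : t ∈ sphereN N := hT1 t htT
      have hov : 1 - (N : ℝ) ^ (-α) ≤ overlap x₀ ⟨t, htS⟩ :=
        overlap_of_dist_le hNpos _ _ htd
      by_cases hc2 : c / 2 * (N : ℝ) ^ ((1 : ℝ) / 2 + δ) ≤ |F N ω ⟨t, htS⟩ - Eav|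
      · exact Or.inl (Set.mem_biUnion htT ⟨htS, hc2⟩)
      · push_neg at hc2
        refine Or.inr ?_
        have habs : |F N ω x₀ - Eav| ≤ |F N ω x₀ - F N ω ⟨t, htS⟩| + |F N ω ⟨t, htS⟩ - Eav| :=
          abs_sub_le _ _ _
        have h1 : c / 2 * (N : ℝ) ^ ((1 : ℝ) / 2 + δ) ≤ |F N ω x₀ - F N ω ⟨t, htS⟩| := by
          nlinarith [hsup, hc2, habs]
        have hbdd : BddAbove {rr : ℝ | ∃ x y : sphereN N,
            1 - (N : ℝ) ^ (-α) ≤ overlap x y ∧ rr = |F N ω x - F N ω y|} := by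
          obtain ⟨z, -, hz⟩ := isCompact_univ.exists_isMaxOn Set.univ_nonempty
            ((hcont N ω).abs.continuousOn)
          refine ⟨2 * |F N ω z|, ?_⟩
          rintro rr ⟨x, y, -, rfl⟩
          have hzx : |F N ω x| ≤ |F N ω z| := hz (Set.mem_univ x)
          have hzy : |F N ω y| ≤ |F N ω z| := hz (Set.mem_univ y)
          calc |F N ω x - F N ω y| ≤ |F N ω x| + |F N ω y| := abs_sub _ _
            _ ≤ 2 * |F N ω z| := by linarith
        exact le_trans h1 (le_csSup hbdd ⟨x₀, ⟨t, htS⟩, hov, rfl⟩)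
    have hAbound : ∀ t ∈ T, μ N (Aset t) ≤
        ENNReal.ofReal (C₁ * Real.exp (-c₁ * (N : ℝ) ^ e)) := by
      intro t htT
      have htS := hT1 t htT
      have hAeq : Aset t = {ω | c / 2 * (N : ℝ) ^ ((1 : ℝ) / 2 + δ) ≤
          |F N ω ⟨t, htS⟩ - Eav|} := by
        ext ω
        constructor
        · rintro ⟨h, hh⟩; exact hh
        · intro hh; exact ⟨htS, hh⟩
      rw [hAeq, transfer hNpos (μ N) (F N) (hmeas N) (hiso N) ⟨t, htS⟩ _ Eav]
      exact Hpt N hN2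
    have hsum : μ N (⋃ t ∈ T, Aset t) ≤
        (T.card : ℝ≥0∞) * ENNReal.ofReal (C₁ * Real.exp (-c₁ * (N : ℝ) ^ e)) := by
      refine (measure_biUnion_finset_le T Aset).trans ?_
      rw [← nsmul_eq_mul]
      exact Finset.sum_le_card_nsmul T _ _ hAbound
    have hkey : μ N {ω | c * (N : ℝ) ^ ((1 : ℝ) / 2 + δ) ≤ ⨆ x : sphereN N, |F N ω x - Eav|}
        ≤ ENNReal.ofReal ((T.card : ℝ) * (C₁ * Real.exp (-c₁ * (N : ℝ) ^ e))
          + C₂ * Real.exp (-c₂ * (N : ℝ) ^ e)) := by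
      have hp : (0:ℝ) ≤ (T.card : ℝ) * (C₁ * Real.exp (-c₁ * (N : ℝ) ^ e)) :=
        mul_nonneg (Nat.cast_nonneg _) (mul_nonneg hC₁.le (Real.exp_nonneg _))
      have hq : (0:ℝ) ≤ C₂ * Real.exp (-c₂ * (N : ℝ) ^ e) :=
        mul_nonneg hC₂.le (Real.exp_nonneg _)
      refine (measure_mono hincl).trans (le_trans (measure_union_le (⋃ t ∈ T, Aset t) Bset) ?_)
      rw [ENNReal.ofReal_add hp hq]
      refine add_le_add (hsum.trans ?_) (Hmod N hN2)
      rw [← ENNReal.ofReal_natCast T.card, ← ENNReal.ofReal_mul (Nat.cast_nonneg _)]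
    refine hkey.trans (ENNReal.ofReal_le_ofReal ?_)
    have hlogN := hN₀ N hcase
    have hcard2 : (T.card : ℝ) ≤ Real.exp (c₁ / 2 * (N : ℝ) ^ e) := by
      refine hT2.trans ?_
      refine le_trans (pow_le_pow_left₀ (by positivity) (base_bound (by omega) hα) N) ?_
      exact pow_bound (by omega) hα hlogN
    have hNe0 : (0:ℝ) ≤ (N : ℝ) ^ e := Real.rpow_nonneg hN'.le _
    have hexp1 : (T.card : ℝ) * (C₁ * Real.exp (-c₁ * (N : ℝ) ^ e))
        ≤ C₁ * Real.exp (-(c₁ / 2) * (N : ℝ) ^ e) := by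
      calc (T.card : ℝ) * (C₁ * Real.exp (-c₁ * (N : ℝ) ^ e))
          ≤ Real.exp (c₁ / 2 * (N : ℝ) ^ e) * (C₁ * Real.exp (-c₁ * (N : ℝ) ^ e)) :=
            mul_le_mul_of_nonneg_right hcard2 (by positivity)
        _ = C₁ * Real.exp (-(c₁ / 2) * (N : ℝ) ^ e) := by
            rw [mul_left_comm, ← Real.exp_add]
            congr 2
            ring
    have hmono1 : Real.exp (-(c₁ / 2) * (N : ℝ) ^ e) ≤ Real.exp (-f * (N : ℝ) ^ e) := by
      apply Real.exp_le_exp.mpr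
      have : f ≤ c₁ / 2 := min_le_left _ _
      nlinarith [hNe0]
    have hmono2 : Real.exp (-c₂ * (N : ℝ) ^ e) ≤ Real.exp (-f * (N : ℝ) ^ e) := by
      apply Real.exp_le_exp.mpr
      have : f ≤ c₂ := min_le_right _ _
      nlinarith [hNe0]
    have hCle : C₁ + C₂ ≤ Cfin := by
      rw [hCfin]
      nlinarith [Real.exp_pos (f * ((N₀ : ℝ) + 1) ^ ((1 : ℝ) + 2 * δ))]
    calc (T.card : ℝ) * (C₁ * Real.exp (-c₁ * (N : ℝ) ^ e)) + C₂ * Real.exp (-c₂ * (N : ℝ) ^ e)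
        ≤ C₁ * Real.exp (-f * (N : ℝ) ^ e) + C₂ * Real.exp (-f * (N : ℝ) ^ e) := by
          have h1 := hexp1.trans (mul_le_mul_of_nonneg_left hmono1 hC₁.le)
          have h2 := mul_le_mul_of_nonneg_left hmono2 hC₂.le
          linarith
      _ = (C₁ + C₂) * Real.exp (-f * (N : ℝ) ^ e) := by ring
      _ ≤ Cfin * Real.exp (-f * (N : ℝ) ^ e) :=
          mul_le_mul_of_nonneg_right hCle (Real.exp_nonneg _)
  · -- small N case
    push_neg at hcase
    have hNe : (N : ℝ) ^ e ≤ ((N₀ : ℝ) + 1) ^ e := by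
      apply Real.rpow_le_rpow hN'.le ?_ hepos.le
      have : (N : ℝ) ≤ (N₀ : ℝ) := by exact_mod_cast hcase.le
      linarith
    have h1 : (1:ℝ) ≤ Cfin * Real.exp (-f * (N : ℝ) ^ e) := by
      have hstep : (1:ℝ) ≤ Real.exp (f * ((N₀ : ℝ) + 1) ^ e) * Real.exp (-f * (N : ℝ) ^ e) := by
        rw [← Real.exp_add]
        apply Real.one_le_exp
        nlinarith [hfpos.le, hNe]
      calc (1:ℝ) ≤ Real.exp (f * ((N₀ : ℝ) + 1) ^ e) * Real.exp (-f * (N : ℝ) ^ e) := hstep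
        _ ≤ Cfin * Real.exp (-f * (N : ℝ) ^ e) := by
            apply mul_le_mul_of_nonneg_right ?_ (Real.exp_nonneg _)
            rw [hCfin, he]
            nlinarith [hC₁.le, hC₂.le]
    calc μ N {ω | c * (N : ℝ) ^ ((1 : ℝ) / 2 + δ) ≤
          ⨆ x : sphereN N, |F N ω x - Eav|} ≤ 1 := prob_le_one
      _ = ENNReal.ofReal 1 := by simp
      _ ≤ ENNReal.ofReal (Cfin * Real.exp (-f * (N : ℝ) ^ e)) := ENNReal.ofReal_le_ofReal h1
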